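/- Let n ≥ 0 and let p, q : Fin n → ℝ satisfy p_t ≥ 0, q_t ≥ 0, and p_t + q_t ≤ 1 for every t. Then ∏_t (1 − q_t − (3/4)·p_t) + (1/4)·∑_t p_t · ∏_{t′ ≠ t} (1 − q_{t′} − (3/4)·p_{t′}) ≤ ∏_t (1 − q_t − (1/2)·p_t). -/

import Mathlib

open Finset

lemma aux_prod_sum {ι : Type*} [DecidableEq ι] (a b : ι → ℝ) (s : Finset ι)
    (hb : ∀ t ∈ s, 0 ≤ b t) (hba : ∀ t ∈ s, b t ≤ a t) :
    ∏ t ∈ s, (a t - b t) + ∑ t ∈ s, b t * ∏ t' ∈ s.erase t, (a t' - b t')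
      ≤ ∏ t ∈ s, a t := by
  induction s using Finset.induction_on with
  | empty => simp
  | @insert x s hx ih =>
    have hbx : 0 ≤ b x := hb x (mem_insert_self _ _)
    have hax : b x ≤ a x := hba x (mem_insert_self _ _)
    have hb' : ∀ t ∈ s, 0 ≤ b t := fun t ht => hb t (mem_insert_of_mem ht)
    have hba' : ∀ t ∈ s, b t ≤ a t := fun t ht => hba t (mem_insert_of_mem ht)
    have ihs := ih hb' hba'
    have hS : 0 ≤ ∑ t ∈ s, b t * ∏ t' ∈ s.erase t, (a t' - b t') := by
      apply Finset.sum_nonneg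
      intro t ht
      apply mul_nonneg (hb' t ht)
      apply Finset.prod_nonneg
      intro t' ht'
      have := hba' t' (mem_of_mem_erase ht')
      have := hb' t' (mem_of_mem_erase ht')
      linarith
    rw [Finset.prod_insert hx, Finset.prod_insert hx, Finset.sum_insert hx]
    rw [Finset.erase_insert hx]
    have hrw : ∀ t ∈ s, b t * ∏ t' ∈ (insert x s).erase t, (a t' - b t')
        = (a x - b x) * (b t * ∏ t' ∈ s.erase t, (a t' - b t')) := by
      intro t ht
      have hne : x ≠ t := fun h => hx (h ▸ ht)
      rw [Finset.erase_insert_of_ne hne, Finset.prod_insert (by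
        simp [hx, mem_erase])]
      ring
    rw [Finset.sum_congr rfl hrw, ← Finset.mul_sum]
    set P := ∏ t ∈ s, (a t - b t)
    set S := ∑ t ∈ s, b t * ∏ t' ∈ s.erase t, (a t' - b t')
    have h1 : (a x - b x) * P + (b x * P + (a x - b x) * S)
        = a x * (P + S) - b x * S := by ring
    have h2 : a x * (P + S) ≤ a x * ∏ t ∈ s, a t :=
      mul_le_mul_of_nonneg_left ihs (le_trans hbx hax)
    nlinarith [mul_nonneg hbx hS]

/-- Remark attached to Lemma 6.3 (Two-Way SOCS for Display Ads): the last three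
terms of the closed-form bound combine to a non-positive quantity. -/
theorem display_ads_remainder_nonpos
    (n : ℕ) (p q : Fin n → ℝ)
    (hp : ∀ t, 0 ≤ p t) (hq : ∀ t, 0 ≤ q t) (hpq : ∀ t, p t + q t ≤ 1) :
    (∏ t, (1 - q t - (3/4) * p t))
        + (1/4) * ∑ t, p t * ∏ t' ∈ univ.erase t, (1 - q t' - (3/4) * p t')
      ≤ ∏ t, (1 - q t - (1/2) * p t) := by
  have key := aux_prod_sum (fun t => 1 - q t - (1/2) * p t) (fun t => (1/4) * p t)
    Finset.univ
    (fun t _ => by have := hp t; linarith)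
    (fun t _ => by have := hpq t; have := hp t; linarith)
  have e1 : ∀ t : Fin n, (1 : ℝ) - q t - (1/2) * p t - (1/4) * p t
      = 1 - q t - (3/4) * p t := fun t => by ring
  simp only [e1] at key
  calc (∏ t, (1 - q t - (3/4) * p t))
        + (1/4) * ∑ t, p t * ∏ t' ∈ univ.erase t, (1 - q t' - (3/4) * p t')
      = (∏ t, (1 - q t - (3/4) * p t))
        + ∑ t, (1/4) * p t * ∏ t' ∈ univ.erase t, (1 - q t' - (3/4) * p t') := by
          rw [Finset.mul_sum]; congr 1; apply Finset.sum_congr rfl; intros; ring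
    _ ≤ _ := key
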